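/- Iterated cut-norm bound: let B : [n]^{d+1} → [−1,1] and let Q₁,...,Q_{d+1} be independent uniformly random q-subsets of [n]^{[d+1]∖{j}} (for j = 1,...,d+1 respectively). Then the one-sided cut-norm satisfies ‖B‖⁺_{□,d} ≤ (1/n^{d+1}) E[max over R_j ⊆ Q_j of B(R₁⁺,...,R_{d+1}⁺)] + (d+1)/√q, where ‖B‖⁺_{□,d} = max over S₁,...,S_{d+1}⊆[n] of B(S₁,...,S_{d+1})/n^{d+1}, and R⁺ is the positive-majority set defined from R as in the one-coordinate bound. -/

import Mathlib

open MeasureTheory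

noncomputable section

/-- Insert the value `v` at coordinate `j` of a partial tuple `g` defined on the
remaining coordinates. -/
def insertAt {n d : ℕ} (j : Fin (d + 1)) (v : Fin n)
    (g : {i : Fin (d + 1) // i ≠ j} → Fin n) : Fin (d + 1) → Fin n :=
  fun i => if h : i = j then v else g ⟨i, h⟩

open Classical in
/-- The positive-majority set `R⁺` determined by a set `R` of partial tuples. -/
def plusSet {n d : ℕ} (B : (Fin (d + 1) → Fin n) → ℝ) (j : Fin (d + 1))
    (R : Finset ({i : Fin (d + 1) // i ≠ j} → Fin n)) : Finset (Fin n) :=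
  Finset.univ.filter fun v => 0 < ∑ g ∈ R, B (insertAt j v g)

/-- `B(T₁,…,T_{d+1})`: the sum of the tensor over a box. -/
def boxSum {n d : ℕ} (B : (Fin (d + 1) → Fin n) → ℝ)
    (S : Fin (d + 1) → Finset (Fin n)) : ℝ :=
  ∑ v ∈ Fintype.piFinset S, B v

open Classical in
/-- The family of `q`-subsets of the partial tuples missing coordinate `j`. -/
def qSubsets (n d q : ℕ) (j : Fin (d + 1)) :
    Finset (Finset ({i : Fin (d + 1) // i ≠ j} → Fin n)) :=
  Finset.univ.filter fun Q => Q.card = q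

/-- The one-sided cut-norm of a tensor on `[n]^{d+1}`. -/
def onesidedCutNorm (n d : ℕ) (B : (Fin (d + 1) → Fin n) → ℝ) : ℝ :=
  (⨆ S : Fin (d + 1) → Finset (Fin n), boxSum B S) / (n : ℝ) ^ (d + 1)

/-- The inner maximum `max_{R_j ⊆ Q_j} B(R₁⁺,…,R_{d+1}⁺)`. -/
def innerMax {n d : ℕ} (B : (Fin (d + 1) → Fin n) → ℝ)
    (Q : ∀ j : Fin (d + 1), Finset ({i : Fin (d + 1) // i ≠ j} → Fin n)) : ℝ :=
  sSup { r | ∃ R : ∀ j : Fin (d + 1), Finset ({i : Fin (d + 1) // i ≠ j} → Fin n),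
    (∀ j, R j ⊆ Q j) ∧ r = boxSum B (fun j => plusSet B j (R j)) }



section AuxProof
open Finset

lemma card_pcs_filter_mem {α : Type*} [DecidableEq α] (s : Finset α) (g : α) (hg : g ∈ s) (k : ℕ) :
    ((s.powersetCard (k+1)).filter (fun Q => g ∈ Q)).card
      = ((s.erase g).powersetCard k).card := by
  apply Finset.card_nbij' (i := fun Q => Q.erase g) (j := fun P => insert g P)
  · intro Q hQ
    simp only [mem_coe, mem_filter, mem_powersetCard] at hQ ⊢
    obtain ⟨⟨hsub, hcard⟩, hmem⟩ := hQ
    refine ⟨Finset.erase_subset_erase _ hsub, ?_⟩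
    rw [Finset.card_erase_of_mem hmem, hcard]; rfl
  · intro P hP
    simp only [mem_coe, mem_powersetCard] at hP
    obtain ⟨hsub, hcard⟩ := hP
    have hgP : g ∉ P := fun h => (Finset.mem_erase.1 (hsub h)).1 rfl
    simp only [mem_coe, mem_filter, mem_powersetCard]
    refine ⟨⟨?_, ?_⟩, Finset.mem_insert_self _ _⟩
    · exact Finset.insert_subset hg (hsub.trans (Finset.erase_subset _ _))
    · rw [Finset.card_insert_of_notMem hgP, hcard]
  · intro Q hQ
    simp only [mem_coe, mem_filter] at hQ
    exact Finset.insert_erase hQ.2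
  · intro P hP
    simp only [mem_coe, mem_powersetCard] at hP
    have hgP : g ∉ P := fun h => (Finset.mem_erase.1 (hP.1 h)).1 rfl
    exact Finset.erase_insert hgP

lemma card_pcs_filter_pair {α : Type*} [DecidableEq α] (s : Finset α) (g h : α) (hgh : g ≠ h)
    (hg : g ∈ s) (hh : h ∈ s) (k : ℕ) :
    ((s.powersetCard (k+2)).filter (fun Q => g ∈ Q ∧ h ∈ Q)).card
      = (((s.erase g).erase h).powersetCard k).card := by
  have step : ((s.powersetCard (k+2)).filter (fun Q => g ∈ Q ∧ h ∈ Q)).card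
      = (((s.erase g).powersetCard (k+1)).filter (fun Q => h ∈ Q)).card := by
    apply Finset.card_nbij' (i := fun Q => Q.erase g) (j := fun P => insert g P)
    · intro Q hQ
      simp only [mem_coe, mem_filter, mem_powersetCard] at hQ ⊢
      obtain ⟨⟨hsub, hcard⟩, hmemg, hmemh⟩ := hQ
      refine ⟨⟨Finset.erase_subset_erase _ hsub, ?_⟩, Finset.mem_erase.2 ⟨Ne.symm hgh, hmemh⟩⟩
      rw [Finset.card_erase_of_mem hmemg, hcard]; rfl
    · intro P hP
      simp only [mem_coe, mem_filter, mem_powersetCard] at hP ⊢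
      obtain ⟨⟨hsub, hcard⟩, hmemh⟩ := hP
      have hgP : g ∉ P := fun hx => (Finset.mem_erase.1 (hsub hx)).1 rfl
      refine ⟨⟨Finset.insert_subset hg (hsub.trans (Finset.erase_subset _ _)), ?_⟩,
        Finset.mem_insert_self _ _, Finset.mem_insert_of_mem hmemh⟩
      rw [Finset.card_insert_of_notMem hgP, hcard]
    · intro Q hQ
      simp only [mem_coe, mem_filter] at hQ
      exact Finset.insert_erase hQ.2.1
    · intro P hP
      simp only [mem_coe, mem_filter, mem_powersetCard] at hP
      have hgP : g ∉ P := fun hx => (Finset.mem_erase.1 (hP.1.1 hx)).1 rfl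
      exact Finset.erase_insert hgP
  rw [step, card_pcs_filter_mem (s.erase g) h (Finset.mem_erase.2 ⟨Ne.symm hgh, hh⟩) k]

lemma tN_identity {α : Type*} [DecidableEq α] (s : Finset α) (g : α) (hg : g ∈ s) (q : ℕ) :
    ((s.powersetCard q).filter (fun Q => g ∈ Q)).card * s.card
      = (s.powersetCard q).card * q := by
  obtain _ | k := q
  · rw [Finset.powersetCard_zero]
    simp [Finset.filter_singleton]
  · rw [card_pcs_filter_mem s g hg k, Finset.card_powersetCard, Finset.card_powersetCard,
      Finset.card_erase_of_mem hg]
    have hs : 1 ≤ s.card := Finset.card_pos.2 ⟨g, hg⟩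
    have := Nat.add_one_mul_choose_eq (s.card - 1) k
    rw [Nat.sub_add_cancel hs] at this
    rw [mul_comm, this]

lemma uNN_identity {α : Type*} [DecidableEq α] (s : Finset α) (g h : α) (hgh : g ≠ h)
    (hg : g ∈ s) (hh : h ∈ s) (q : ℕ) :
    ((s.powersetCard q).filter (fun Q => g ∈ Q ∧ h ∈ Q)).card * (s.card * (s.card - 1))
      = (s.powersetCard q).card * (q * (q - 1)) := by
  have hs2 : 2 ≤ s.card := Finset.one_lt_card.2 ⟨g, hg, h, hh, hgh⟩
  obtain _ | k := q
  · rw [Finset.powersetCard_zero]; simp [Finset.filter_singleton]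
  obtain _ | k := k
  · have : ((s.powersetCard 1).filter (fun Q => g ∈ Q ∧ h ∈ Q)) = ∅ := by
      apply Finset.filter_false_of_mem
      intro Q hQ hc
      rw [Finset.mem_powersetCard] at hQ
      obtain ⟨x, hx⟩ := Finset.card_eq_one.1 hQ.2
      rw [hx, Finset.mem_singleton, Finset.mem_singleton] at hc
      exact hgh (hc.1.trans hc.2.symm)
    rw [this]; simp
  · rw [card_pcs_filter_pair s g h hgh hg hh k, Finset.card_powersetCard,
      Finset.card_powersetCard, Finset.card_erase_of_mem (Finset.mem_erase.2 ⟨Ne.symm hgh, hh⟩),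
      Finset.card_erase_of_mem hg]
    have h1 : 1 ≤ s.card := le_trans (by norm_num) hs2
    have e1 := Nat.add_one_mul_choose_eq (s.card - 1 - 1) k
    rw [Nat.sub_add_cancel (by omega)] at e1
    have e2 := Nat.add_one_mul_choose_eq (s.card - 1) (k+1)
    rw [Nat.sub_add_cancel h1] at e2
    -- (s.card-1-1).choose k * (s.card * (s.card-1)) = s.card.choose (k+2) * ((k+2)*(k+1))
    calc (s.card - 1 - 1).choose k * (s.card * (s.card - 1))
        = s.card * ((s.card - 1) * (s.card - 1 - 1).choose k) := by ring
      _ = s.card * ((s.card - 1).choose (k+1) * (k+1)) := by rw [e1]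
      _ = (s.card * (s.card - 1).choose (k+1)) * (k+1) := by ring
      _ = (s.card.choose (k+2) * (k+2)) * (k+1) := by rw [e2]
      _ = s.card.choose (k + 1 + 1) * ((k + 1 + 1) * (k + 1 + 1 - 1)) := by rw [Nat.add_sub_cancel]; ring

section Samp
variable {α : Type*} [Fintype α] [DecidableEq α]

set_option maxHeartbeats 1000000 in
lemma samp_var {q : ℕ} (hq : 1 ≤ q) (hqN : q ≤ Fintype.card α)
    (a : α → ℝ) (ha : ∀ g, |a g| ≤ 1) :
    ∑ Q ∈ Finset.powersetCard q (Finset.univ : Finset α),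
        ((∑ g ∈ Q, a g) - ((q : ℝ) / (Fintype.card α : ℝ)) * (∑ g, a g)) ^ 2
      ≤ ((Finset.powersetCard q (Finset.univ : Finset α)).card : ℝ) * q := by
  classical
  set N := Fintype.card α with hN
  set M := Finset.powersetCard q (Finset.univ : Finset α) with hM
  have hNpos : 0 < N := lt_of_lt_of_le hq hqN
  have hNr0 : (0:ℝ) < (N:ℝ) := by exact_mod_cast hNpos
  rcases eq_or_lt_of_le hqN with heq | hlt
  · -- q = N : M = {univ}, deterministic
    have hMuniv : M = {Finset.univ} := by
      rw [hM, heq, hN, ← Finset.card_univ, Finset.powersetCard_self]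
    rw [hMuniv, Finset.sum_singleton]
    have : ((q:ℝ) / (N:ℝ)) = 1 := by rw [heq]; exact div_self (ne_of_gt hNr0)
    rw [this, one_mul, sub_self]
    have : (0:ℝ) ≤ ((M.card : ℝ)) * q := by positivity
    simpa using this
  · -- main case : q < N
    have hN2 : 2 ≤ N := lt_of_le_of_lt hq hlt
    have hqr : (1:ℝ) ≤ (q:ℝ) := by exact_mod_cast hq
    have hqNr : (q:ℝ) + 1 ≤ (N:ℝ) := by exact_mod_cast hlt
    have hNr1 : (0:ℝ) < (N:ℝ) - 1 := by linarith
    set S := ∑ g, a g with hS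
    set A := ∑ g, (a g)^2 with hA
    set mr := ((M.card : ℕ) : ℝ) with hmr
    set qr := ((q:ℕ):ℝ) with hqrdef
    set Nr := ((N:ℕ):ℝ) with hNrdef
    set tre := mr * qr / Nr with htre
    set ure := mr * (qr * (qr - 1)) / (Nr * (Nr - 1)) with hure
    have hmr0 : (0:ℝ) ≤ mr := by positivity
    -- counting facts
    have ht : ∀ g : α, ((M.filter (fun Q => g ∈ Q)).card : ℝ) = tre := by
      intro g
      have := tN_identity (Finset.univ : Finset α) g (Finset.mem_univ g) q
      rw [Finset.card_univ, ← hN, ← hM] at this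
      have hcast : ((M.filter (fun Q => g ∈ Q)).card : ℝ) * (N:ℝ) = ((M.card : ℕ):ℝ) * (q:ℝ) := by
        exact_mod_cast this
      rw [htre, eq_div_iff (ne_of_gt hNr0)]
      exact hcast
    have hu : ∀ g h : α, g ≠ h → ((M.filter (fun Q => g ∈ Q ∧ h ∈ Q)).card : ℝ) = ure := by
      intro g h hgh
      have := uNN_identity (Finset.univ : Finset α) g h hgh (Finset.mem_univ g)
        (Finset.mem_univ h) q
      rw [Finset.card_univ, ← hN, ← hM] at this
      have hcast : ((M.filter (fun Q => g ∈ Q ∧ h ∈ Q)).card : ℝ) * ((N:ℝ) * ((N:ℝ) - 1))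
          = ((M.card : ℕ):ℝ) * ((q:ℝ) * ((q:ℝ) - 1)) := by
        have h3 := congrArg (Nat.cast (R := ℝ)) this
        push_cast [Nat.cast_sub (show 1 ≤ N by omega), Nat.cast_sub hq] at h3
        exact h3
      rw [hure, eq_div_iff (by positivity)]
      exact hcast
    have hX : ∀ Q : Finset α, (∑ g ∈ Q, a g) = ∑ g, if g ∈ Q then a g else 0 := by
      intro Q
      rw [Finset.sum_ite_mem, Finset.univ_inter]
    -- first moment
    have hsum1 : ∑ Q ∈ M, (∑ g ∈ Q, a g) = tre * S := by
      calc ∑ Q ∈ M, (∑ g ∈ Q, a g) = ∑ Q ∈ M, ∑ g, if g ∈ Q then a g else 0 :=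
            Finset.sum_congr rfl fun Q _ => hX Q
        _ = ∑ g, ∑ Q ∈ M, if g ∈ Q then a g else 0 := Finset.sum_comm
        _ = ∑ g, tre * a g := by
            refine Finset.sum_congr rfl fun g _ => ?_
            rw [← Finset.sum_filter, Finset.sum_const, nsmul_eq_mul, ht g]
        _ = tre * S := by rw [hS, Finset.mul_sum]
    -- second moment
    have hsum2 : ∑ Q ∈ M, (∑ g ∈ Q, a g)^2 = tre * A + ure * (S^2 - A) := by
      have step1 : ∀ Q : Finset α,
          (∑ g ∈ Q, a g)^2 = ∑ g, ∑ h, (if g ∈ Q ∧ h ∈ Q then a g * a h else 0) := by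
        intro Q
        rw [sq, hX Q, Finset.sum_mul_sum]
        refine Finset.sum_congr rfl fun g _ => Finset.sum_congr rfl fun h _ => ?_
        by_cases hg : g ∈ Q <;> by_cases hh : h ∈ Q <;> simp [hg, hh]
      calc ∑ Q ∈ M, (∑ g ∈ Q, a g)^2
          = ∑ Q ∈ M, ∑ g, ∑ h, (if g ∈ Q ∧ h ∈ Q then a g * a h else 0) :=
            Finset.sum_congr rfl fun Q _ => step1 Q
        _ = ∑ g, ∑ Q ∈ M, ∑ h, (if g ∈ Q ∧ h ∈ Q then a g * a h else 0) := Finset.sum_comm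
        _ = ∑ g, ∑ h, ∑ Q ∈ M, (if g ∈ Q ∧ h ∈ Q then a g * a h else 0) :=
            Finset.sum_congr rfl fun g _ => Finset.sum_comm
        _ = ∑ g, ∑ h, ((M.filter (fun Q => g ∈ Q ∧ h ∈ Q)).card : ℝ) * (a g * a h) := by
            refine Finset.sum_congr rfl fun g _ => Finset.sum_congr rfl fun h _ => ?_
            rw [← Finset.sum_filter, Finset.sum_const, nsmul_eq_mul]
        _ = ∑ g, (tre * (a g * a g) + ∑ h ∈ Finset.univ.erase g, ure * (a g * a h)) := by
            refine Finset.sum_congr rfl fun g _ => ?_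
            rw [← Finset.add_sum_erase _ _ (Finset.mem_univ g)]
            congr 1
            · have : (M.filter (fun Q => g ∈ Q ∧ g ∈ Q)) = M.filter (fun Q => g ∈ Q) := by
                simp
              rw [this, ht g]
            · refine Finset.sum_congr rfl fun h hh => ?_
              rw [hu g h (Ne.symm (Finset.mem_erase.1 hh).1)]
        _ = tre * A + ure * (S^2 - A) := by
            have inner : ∀ g : α, ∑ h ∈ Finset.univ.erase g, ure * (a g * a h)
                = ure * (a g * (S - a g)) := by
              intro g
              rw [← Finset.mul_sum, ← Finset.mul_sum, Finset.sum_erase_eq_sub (Finset.mem_univ g), ← hS]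
            simp_rw [inner]
            rw [Finset.sum_add_distrib, ← Finset.mul_sum, ← Finset.mul_sum]
            have e1 : (∑ g, a g * a g) = A := by simp_rw [← sq]; exact hA.symm
            have e2 : (∑ g, a g * (S - a g)) = S^2 - A := by
              have h4 : ∑ g, a g * (S - a g) = (∑ g, a g) * S - ∑ g, (a g)^2 := by
                rw [Finset.sum_mul, ← Finset.sum_sub_distrib]
                exact Finset.sum_congr rfl fun g _ => by ring
              rw [h4, ← hS, ← hA, sq]
            rw [e1, e2]
    -- expansion
    have expand : ∑ Q ∈ M, ((∑ g ∈ Q, a g) - (qr/Nr) * S)^2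
        = (∑ Q ∈ M, (∑ g ∈ Q, a g)^2) - 2*(qr/Nr)*S*(∑ Q ∈ M, (∑ g ∈ Q, a g))
          + mr * ((qr/Nr)*S)^2 := by
      have : ∀ Q : Finset α, ((∑ g ∈ Q, a g) - (qr/Nr) * S)^2
          = (∑ g ∈ Q, a g)^2 - 2*(qr/Nr)*S*(∑ g ∈ Q, a g) + ((qr/Nr)*S)^2 := fun Q => by ring
      simp_rw [this]
      rw [Finset.sum_add_distrib, Finset.sum_sub_distrib, ← Finset.mul_sum,
        Finset.sum_const, nsmul_eq_mul]
    -- coefficient inequalities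
    have hAN : A ≤ Nr := by
      rw [hA]
      calc ∑ g, (a g)^2 ≤ ∑ _g : α, (1:ℝ) := by
            refine Finset.sum_le_sum fun g _ => ?_
            have := ha g
            nlinarith [ha g, abs_nonneg (a g), sq_abs (a g)]
        _ = Nr := by rw [Finset.sum_const, Finset.card_univ, nsmul_eq_mul, mul_one]
    have hA0 : (0:ℝ) ≤ A := by rw [hA]; positivity
    have hure0 : (0:ℝ) ≤ ure := by
      rw [hure]
      have : (0:ℝ) ≤ qr - 1 := by linarith
      have : (0:ℝ) ≤ Nr - 1 := by linarith
      positivity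
    have h1 : ure ≤ tre := by
      rw [hure, htre, div_le_div_iff₀ (by positivity) hNr0]
      nlinarith [mul_nonneg (mul_nonneg hmr0 (by linarith : (0:ℝ) ≤ qr)) hNr0.le,
        mul_nonneg (mul_nonneg (mul_nonneg hmr0 (by linarith : (0:ℝ) ≤ qr)) hNr0.le)
          (by linarith : (0:ℝ) ≤ Nr - qr)]
    have h3 : ure ≤ mr * (qr/Nr)^2 := by
      rw [hure, div_pow, ← mul_div_assoc, div_le_div_iff₀ (by positivity) (by positivity)]
      nlinarith [mul_nonneg (mul_nonneg (mul_nonneg hmr0 (by linarith : (0:ℝ) ≤ qr)) hNr0.le)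
          (by linarith : (0:ℝ) ≤ Nr - qr)]
    -- put it together
    clear_value tre ure S A mr qr Nr
    rw [expand, hsum1, hsum2]
    clear expand hsum1 hsum2 ht hu hX hS hA hmr
    clear_value M N
    have hid : tre * A + ure * (S ^ 2 - A) - 2 * (qr / Nr) * S * (tre * S)
          + mr * (qr / Nr * S) ^ 2
        = (tre - ure) * A + (ure - mr * (qr/Nr)^2) * S^2 := by
      rw [htre]; ring
    rw [hid]
    have b1 : (tre - ure) * A ≤ (tre - ure) * Nr :=
      mul_le_mul_of_nonneg_left hAN (by linarith)
    have b3 : tre * Nr = mr * qr := by rw [htre]; exact div_mul_cancel₀ _ (ne_of_gt hNr0)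
    have b2 : (ure - mr * (qr/Nr)^2) * S^2 ≤ 0 :=
      mul_nonpos_iff.2 (Or.inr ⟨by linarith, sq_nonneg S⟩)
    have b4 : (tre - ure) * Nr ≤ tre * Nr :=
      mul_le_mul_of_nonneg_right (by linarith) hNr0.le
    linarith [b1, b2, b4, b3]
lemma samp_abs {q : ℕ} (hq : 1 ≤ q) (hqN : q ≤ Fintype.card α)
    (a : α → ℝ) (ha : ∀ g, |a g| ≤ 1) :
    ∑ Q ∈ Finset.powersetCard q (Finset.univ : Finset α),
        |(∑ g, a g) - ((Fintype.card α : ℝ) / (q : ℝ)) * (∑ g ∈ Q, a g)|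
      ≤ ((Finset.powersetCard q (Finset.univ : Finset α)).card : ℝ) * (Fintype.card α)
          / Real.sqrt q := by
  classical
  set N := Fintype.card α with hN
  set M := Finset.powersetCard q (Finset.univ : Finset α) with hM
  set S := ∑ g, a g with hS
  have hq0 : (0:ℝ) < (q:ℝ) := by exact_mod_cast hq
  have hN0 : (0:ℝ) < (N:ℝ) := by exact_mod_cast lt_of_lt_of_le hq hqN
  have hm0 : (0:ℝ) ≤ (M.card : ℝ) := by positivity
  have hsq0 : (0:ℝ) < Real.sqrt q := Real.sqrt_pos.2 hq0
  have hsq : Real.sqrt q * Real.sqrt q = (q:ℝ) := Real.mul_self_sqrt hq0.le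
  have habs : ∀ Q : Finset α,
      |S - ((N:ℝ)/(q:ℝ)) * (∑ g ∈ Q, a g)|
        = ((N:ℝ)/(q:ℝ)) * |(∑ g ∈ Q, a g) - ((q:ℝ)/(N:ℝ)) * S| := by
    intro Q
    rw [abs_sub_comm]
    have key : ((N:ℝ)/(q:ℝ)) * ((∑ g ∈ Q, a g) - ((q:ℝ)/(N:ℝ)) * S)
        = ((N:ℝ)/(q:ℝ)) * (∑ g ∈ Q, a g) - S := by
      field_simp
    rw [← key, abs_mul, abs_of_pos (div_pos hN0 hq0)]
  have step1 : ∑ Q ∈ M, |S - ((N:ℝ)/(q:ℝ)) * (∑ g ∈ Q, a g)|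
      = ((N:ℝ)/(q:ℝ)) * ∑ Q ∈ M, |(∑ g ∈ Q, a g) - ((q:ℝ)/(N:ℝ)) * S| := by
    rw [Finset.mul_sum]
    exact Finset.sum_congr rfl fun Q _ => habs Q
  have hZ0 : (0:ℝ) ≤ ∑ Q ∈ M, |(∑ g ∈ Q, a g) - ((q:ℝ)/(N:ℝ)) * S| :=
    Finset.sum_nonneg fun Q _ => abs_nonneg _
  have cs : (∑ Q ∈ M, |(∑ g ∈ Q, a g) - ((q:ℝ)/(N:ℝ)) * S|)^2
      ≤ ((M.card : ℝ)) * ((M.card : ℝ) * q) := by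
    calc (∑ Q ∈ M, |(∑ g ∈ Q, a g) - ((q:ℝ)/(N:ℝ)) * S|)^2
        ≤ (M.card : ℝ) * ∑ Q ∈ M, |(∑ g ∈ Q, a g) - ((q:ℝ)/(N:ℝ)) * S|^2 :=
          sq_sum_le_card_mul_sum_sq
      _ = (M.card : ℝ) * ∑ Q ∈ M, ((∑ g ∈ Q, a g) - ((q:ℝ)/(N:ℝ)) * S)^2 := by
          congr 1
          exact Finset.sum_congr rfl fun Q _ => sq_abs _
      _ ≤ (M.card : ℝ) * ((M.card : ℝ) * q) := by
          have := samp_var hq hqN a ha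
          rw [← hN, ← hM, ← hS] at this
          exact mul_le_mul_of_nonneg_left this hm0
  have step2 : ∑ Q ∈ M, |(∑ g ∈ Q, a g) - ((q:ℝ)/(N:ℝ)) * S|
      ≤ (M.card : ℝ) * Real.sqrt q := by
    have h1 : ∑ Q ∈ M, |(∑ g ∈ Q, a g) - ((q:ℝ)/(N:ℝ)) * S|
        = Real.sqrt ((∑ Q ∈ M, |(∑ g ∈ Q, a g) - ((q:ℝ)/(N:ℝ)) * S|)^2) :=
      (Real.sqrt_sq hZ0).symm
    rw [h1]
    have h2 : ((M.card : ℝ)) * ((M.card : ℝ) * q) = ((M.card : ℝ) * Real.sqrt q)^2 := by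
      rw [mul_pow, sq, sq, hsq]
      ring
    rw [h2] at cs
    calc Real.sqrt ((∑ Q ∈ M, |(∑ g ∈ Q, a g) - ((q:ℝ)/(N:ℝ)) * S|)^2)
        ≤ Real.sqrt (((M.card : ℝ) * Real.sqrt q)^2) := Real.sqrt_le_sqrt cs
      _ = (M.card : ℝ) * Real.sqrt q := Real.sqrt_sq (mul_nonneg hm0 hsq0.le)
  rw [step1]
  calc ((N:ℝ)/(q:ℝ)) * ∑ Q ∈ M, |(∑ g ∈ Q, a g) - ((q:ℝ)/(N:ℝ)) * S|
      ≤ ((N:ℝ)/(q:ℝ)) * ((M.card : ℝ) * Real.sqrt q) :=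
        mul_le_mul_of_nonneg_left step2 (by positivity)
    _ = (M.card : ℝ) * (N:ℝ) / Real.sqrt q := by
        rw [div_mul_eq_mul_div, div_eq_div_iff (ne_of_gt hq0) (ne_of_gt hsq0)]
        linear_combination ((N:ℝ) * (M.card : ℝ)) * hsq
end Samp

-- ====== auxiliary development ======

/-- dependent insertion -/
def dinsert {ι : Type*} [DecidableEq ι] {β : ι → Type*} (j : ι) (x : β j)
    (g : ∀ i : {i : ι // i ≠ j}, β i.1) : ∀ i, β i :=
  fun i => if h : i = j then cast (congrArg β h).symm x else g ⟨i, h⟩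

lemma dinsert_same {ι : Type*} [DecidableEq ι] {β : ι → Type*} (j : ι) (x : β j)
    (g : ∀ i : {i : ι // i ≠ j}, β i.1) : dinsert j x g j = x := by
  unfold dinsert
  rw [dif_pos rfl]
  exact eq_of_heq (cast_heq _ _)

lemma dinsert_ne {ι : Type*} [DecidableEq ι] {β : ι → Type*} (j : ι) (x : β j)
    (g : ∀ i : {i : ι // i ≠ j}, β i.1) (i : ι) (h : i ≠ j) :
    dinsert j x g i = g ⟨i, h⟩ := by
  unfold dinsert
  rw [dif_neg h]

lemma dinsert_const {ι : Type*} [DecidableEq ι] {γ : Type*} (j : ι) (x : γ)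
    (g : {i : ι // i ≠ j} → γ) :
    dinsert (β := fun _ => γ) j x g = fun i => if h : i = j then x else g ⟨i, h⟩ := by
  funext i
  unfold dinsert
  by_cases h : i = j
  · rw [dif_pos h, dif_pos h]
    exact eq_of_heq (cast_heq _ _)
  · rw [dif_neg h, dif_neg h]

/-- slicing a sum over a box at one coordinate -/
lemma sum_piFinset_split {ι : Type*} [Fintype ι] [DecidableEq ι] {β : ι → Type*}
    [∀ i, DecidableEq (β i)] (j : ι) (V : ∀ i, Finset (β i)) (F : (∀ i, β i) → ℝ) :
    ∑ w ∈ Fintype.piFinset V, F w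
      = ∑ x ∈ V j, ∑ g ∈ Fintype.piFinset (fun i : {i : ι // i ≠ j} => V i.1),
          F (dinsert j x g) := by
  rw [← Finset.sum_product']
  apply Finset.sum_nbij' (i := fun w => (w j, fun i : {i : ι // i ≠ j} => w i.1))
    (j := fun p => dinsert j p.1 p.2)
  · intro w hw
    rw [Fintype.mem_piFinset] at hw
    rw [Finset.mem_product]
    exact ⟨hw j, Fintype.mem_piFinset.2 fun i => hw i.1⟩
  · intro p hp
    rw [Finset.mem_product] at hp
    rw [Fintype.mem_piFinset]
    intro i
    by_cases h : i = j
    · subst h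
      rw [dinsert_same]
      exact hp.1
    · rw [dinsert_ne _ _ _ _ h]
      exact Fintype.mem_piFinset.1 hp.2 ⟨i, h⟩
  · intro w _
    funext i
    by_cases h : i = j
    · subst h
      rw [dinsert_same]
    · rw [dinsert_ne _ _ _ _ h]
  · intro p _
    have h2 : (fun i : {i : ι // i ≠ j} => dinsert j p.1 p.2 i.1) = p.2 := by
      funext i
      exact dinsert_ne _ _ _ _ i.2
    exact Prod.ext (dinsert_same _ _ _) h2
  · intro w _
    congr 1
    funext i
    by_cases h : i = j
    · subst h
      rw [dinsert_same]
    · rw [dinsert_ne _ _ _ _ h]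

section Hyb
variable {n d : ℕ}

open Classical in
/-- hybrid family: coordinates `< k` replaced by plus-sets of sampled sets. -/
def hybT (B : (Fin (d + 1) → Fin n) → ℝ) (S : Fin (d + 1) → Finset (Fin n))
    (Q : ∀ j : Fin (d + 1), Finset ({i : Fin (d + 1) // i ≠ j} → Fin n)) :
    ℕ → Fin (d + 1) → Finset (Fin n)
  | 0 => S
  | (k + 1) =>
    if h : k < d + 1 then
      Function.update (hybT B S Q k) ⟨k, h⟩
        (plusSet B ⟨k, h⟩ ((Q ⟨k, h⟩).filter
          (fun g => ∀ i : {i : Fin (d + 1) // i ≠ (⟨k, h⟩ : Fin (d + 1))},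
            g i ∈ hybT B S Q k i.1)))
    else hybT B S Q k

open Classical in
/-- the sampled sets chosen in the hybrid argument -/
def hybR (B : (Fin (d + 1) → Fin n) → ℝ) (S : Fin (d + 1) → Finset (Fin n))
    (Q : ∀ j : Fin (d + 1), Finset ({i : Fin (d + 1) // i ≠ j} → Fin n))
    (j : Fin (d + 1)) : Finset ({i : Fin (d + 1) // i ≠ j} → Fin n) :=
  (Q j).filter (fun g => ∀ i : {i : Fin (d + 1) // i ≠ j}, g i ∈ hybT B S Q j.val i.1)

variable {B : (Fin (d + 1) → Fin n) → ℝ} {S : Fin (d + 1) → Finset (Fin n)}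
  {Q : ∀ j : Fin (d + 1), Finset ({i : Fin (d + 1) // i ≠ j} → Fin n)}

lemma hybT_succ_ne (m : ℕ) (i : Fin (d + 1)) (hne : i.val ≠ m) :
    hybT B S Q (m + 1) i = hybT B S Q m i := by
  rw [hybT]
  by_cases h : m < d + 1
  · rw [dif_pos h]
    exact Function.update_of_ne (fun he => hne (by rw [he])) _ _
  · rw [dif_neg h]

lemma hybT_ge (k : ℕ) (i : Fin (d + 1)) (h : k ≤ i.val) : hybT B S Q k i = S i := by
  induction k with
  | zero => rfl
  | succ m ih =>
    rw [hybT_succ_ne m i (by omega), ih (by omega)]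

lemma hybT_val (j : Fin (d + 1)) :
    hybT B S Q (j.val + 1)
      = Function.update (hybT B S Q j.val) j (plusSet B j (hybR B S Q j)) := by
  rw [hybT, dif_pos j.isLt]
  rfl

lemma hybT_final (j : Fin (d + 1)) :
    hybT B S Q (d + 1) j = plusSet B j (hybR B S Q j) := by
  have key : ∀ m, j.val + 1 ≤ m → hybT B S Q m j = plusSet B j (hybR B S Q j) := by
    intro m hm
    induction m with
    | zero => omega
    | succ m ih =>
      rcases Nat.lt_or_ge j.val m with hlt | hge
      · rw [hybT_succ_ne m j (by omega), ih (by omega)]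
      · have : m = j.val := by omega
        subst this
        rw [hybT_val j, Function.update_self]
  exact key (d + 1) j.isLt

lemma hybT_dep {Q' : ∀ j : Fin (d + 1), Finset ({i : Fin (d + 1) // i ≠ j} → Fin n)}
    (m : ℕ) (h : ∀ i : Fin (d + 1), i.val < m → Q i = Q' i) :
    hybT B S Q m = hybT B S Q' m := by
  induction m with
  | zero => rfl
  | succ m ih =>
    have ih' := ih (fun i hi => h i (by omega))
    rw [hybT, hybT]
    by_cases hm : m < d + 1
    · rw [dif_pos hm, dif_pos hm, ih', h ⟨m, hm⟩ (Nat.lt_succ_self m)]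
    · rw [dif_neg hm, dif_neg hm, ih']

lemma qSubsets_eq (n d q : ℕ) (j : Fin (d + 1)) :
    qSubsets n d q j = Finset.powersetCard q (Finset.univ : Finset ({i : Fin (d + 1) // i ≠ j} → Fin n)) := by
  ext Q
  simp [qSubsets, Finset.mem_powersetCard, Finset.subset_univ]

lemma card_partial (n d : ℕ) (j : Fin (d + 1)) :
    Fintype.card ({i : Fin (d + 1) // i ≠ j} → Fin n) = n ^ d := by
  rw [Fintype.card_fun, Fintype.card_fin]
  congr 1
  rw [Fintype.card_subtype, Finset.filter_ne', Finset.card_erase_of_mem (Finset.mem_univ j),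
    Finset.card_univ, Fintype.card_fin]
  omega

lemma boxSum_slice {n d : ℕ} (B : (Fin (d + 1) → Fin n) → ℝ)
    (V : Fin (d + 1) → Finset (Fin n)) (j : Fin (d + 1)) :
    boxSum B V = ∑ v ∈ V j, ∑ g ∈ Fintype.piFinset (fun i : {i : Fin (d + 1) // i ≠ j} => V i.1),
      B (insertAt j v g) := by
  rw [boxSum, sum_piFinset_split j V B]
  simp only [dinsert_const]
  rfl

lemma mem_plusSet {n d : ℕ} {B : (Fin (d + 1) → Fin n) → ℝ} {j : Fin (d + 1)}
    {R : Finset ({i : Fin (d + 1) // i ≠ j} → Fin n)} {v : Fin n} :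
    v ∈ plusSet B j R ↔ 0 < ∑ g ∈ R, B (insertAt j v g) := by
  simp [plusSet]

lemma boxSum_le {n d : ℕ} {B : (Fin (d + 1) → Fin n) → ℝ} (hB : ∀ v, |B v| ≤ 1)
    (V : Fin (d + 1) → Finset (Fin n)) : boxSum B V ≤ (n : ℝ) ^ (d + 1) := by
  calc boxSum B V ≤ ∑ v ∈ Fintype.piFinset V, (1:ℝ) :=
        Finset.sum_le_sum fun v _ => le_of_abs_le (hB v)
    _ = ((Fintype.piFinset V).card : ℝ) := by rw [Finset.sum_const, nsmul_eq_mul, mul_one]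
    _ ≤ (n : ℝ) ^ (d + 1) := by
        have h1 : (Fintype.piFinset V).card ≤ n ^ (d + 1) := by
          rw [Fintype.card_piFinset]
          calc ∏ i, (V i).card ≤ ∏ _i : Fin (d + 1), n := by
                refine Finset.prod_le_prod' fun i _ => ?_
                have := Finset.card_le_univ (V i)
                rwa [Fintype.card_fin] at this
            _ = n ^ (d + 1) := by
                rw [Finset.prod_const, Finset.card_univ, Fintype.card_fin]
        exact_mod_cast h1

end Hyb

set_option maxHeartbeats 2000000 in
lemma step_bound {n d q : ℕ} (hq : 1 ≤ q)
    (hqn : ∀ j : Fin (d + 1), q ≤ Fintype.card ({i : Fin (d + 1) // i ≠ j} → Fin n))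
    (B : (Fin (d + 1) → Fin n) → ℝ) (hB : ∀ v, |B v| ≤ 1)
    (S : Fin (d + 1) → Finset (Fin n)) (k : Fin (d + 1)) :
    ∑ Q ∈ Fintype.piFinset (fun j => qSubsets n d q j),
        (boxSum B (hybT B S Q k.val) - boxSum B (hybT B S Q (k.val + 1)))
      ≤ ((Fintype.piFinset (fun j => qSubsets n d q j)).card : ℝ)
          * ((n : ℝ) ^ (d + 1) / Real.sqrt q) := by
  classical
  set Pi := Fintype.piFinset (fun j => qSubsets n d q j) with hPi
  set N := Fintype.card ({i : Fin (d + 1) // i ≠ k} → Fin n) with hN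
  have hNq : q ≤ N := hqn k
  have hq0 : (0:ℝ) < (q:ℝ) := by exact_mod_cast hq
  have hN0 : (0:ℝ) < (N:ℝ) := by exact_mod_cast lt_of_lt_of_le hq hNq
  set c : ℝ := (N:ℝ) / (q:ℝ) with hc
  have hc0 : 0 < c := div_pos hN0 hq0
  set f := fun (Q : ∀ j : Fin (d + 1), Finset ({i : Fin (d + 1) // i ≠ j} → Fin n)) (v : Fin n) =>
    ∑ g ∈ Fintype.piFinset (fun i : {i : Fin (d + 1) // i ≠ k} => hybT B S Q k.val i.1),
      B (insertAt k v g) with hf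
  set Y := fun (Q : ∀ j : Fin (d + 1), Finset ({i : Fin (d + 1) // i ≠ j} → Fin n)) (v : Fin n) =>
    ∑ g ∈ hybR B S Q k, B (insertAt k v g) with hY
  -- slice both box sums at coordinate k
  have e1 : ∀ Q, boxSum B (hybT B S Q k.val) = ∑ v ∈ S k, f Q v := by
    intro Q
    rw [boxSum_slice B _ k, hybT_ge k.val k le_rfl]
  have e2 : ∀ Q, boxSum B (hybT B S Q (k.val + 1)) = ∑ v ∈ plusSet B k (hybR B S Q k), f Q v := by
    intro Q
    rw [boxSum_slice B _ k, hybT_val k, Function.update_self]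
    refine Finset.sum_congr rfl fun v _ => ?_
    have hrestr : (fun i : {i : Fin (d + 1) // i ≠ k} =>
        Function.update (hybT B S Q k.val) k (plusSet B k (hybR B S Q k)) i.1)
        = fun i : {i : Fin (d + 1) // i ≠ k} => hybT B S Q k.val i.1 := by
      funext i
      exact Function.update_of_ne i.2 _ _
    rw [hrestr]
  -- pointwise comparison
  have e3 : ∀ Q, boxSum B (hybT B S Q k.val) - boxSum B (hybT B S Q (k.val + 1))
      ≤ ∑ v, |f Q v - c * Y Q v| := by
    intro Q
    rw [e1 Q, e2 Q]
    have hS' : ∑ v ∈ S k, f Q v = ∑ v, if v ∈ S k then f Q v else 0 := by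
      rw [Finset.sum_ite_mem, Finset.univ_inter]
    have hP' : ∑ v ∈ plusSet B k (hybR B S Q k), f Q v
        = ∑ v, if v ∈ plusSet B k (hybR B S Q k) then f Q v else 0 := by
      rw [Finset.sum_ite_mem, Finset.univ_inter]
    rw [hS', hP', ← Finset.sum_sub_distrib]
    refine Finset.sum_le_sum fun v _ => ?_
    by_cases hv : v ∈ plusSet B k (hybR B S Q k)
    · have hYv : 0 < Y Q v := mem_plusSet.1 hv
      rw [if_pos hv]
      by_cases hs : v ∈ S k
      · rw [if_pos hs, sub_self]
        exact abs_nonneg _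
      · rw [if_neg hs]
        have h1 : 0 < c * Y Q v := mul_pos hc0 hYv
        have h2 := neg_abs_le (f Q v - c * Y Q v)
        linarith
    · have hYv : Y Q v ≤ 0 := le_of_not_gt (fun hpos => hv (mem_plusSet.2 hpos))
      have hcY : c * Y Q v ≤ 0 := mul_nonpos_iff.2 (Or.inl ⟨hc0.le, hYv⟩)
      have h2 := le_abs_self (f Q v - c * Y Q v)
      rw [if_neg hv]
      by_cases hs : v ∈ S k
      · rw [if_pos hs]
        linarith
      · rw [if_neg hs]
        have := abs_nonneg (f Q v - c * Y Q v)
        linarith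
  -- expectation of the error term
  have e4 : ∑ Q ∈ Pi, ∑ v, |f Q v - c * Y Q v|
      ≤ (Pi.card : ℝ) * ((n : ℝ) ^ (d + 1) / Real.sqrt q) := by
    rw [hPi, sum_piFinset_split k (fun j => qSubsets n d q j)
      (fun Q => ∑ v, |f Q v - c * Y Q v|), Finset.sum_comm]
    set rest := Fintype.piFinset
      (fun i : {i : Fin (d + 1) // i ≠ k} => qSubsets n d q i.1) with hrest
    have inner : ∀ Q' ∈ rest, ∑ Qk ∈ qSubsets n d q k,
        (∑ v, |f (dinsert k Qk Q') v - c * Y (dinsert k Qk Q') v|)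
        ≤ ((qSubsets n d q k).card : ℝ) * ((n:ℝ) * ((N:ℝ) / Real.sqrt q)) := by
      intro Q' _
      set W := hybT B S (dinsert k (∅ : Finset ({i : Fin (d + 1) // i ≠ k} → Fin n)) Q') k.val
        with hW
      have hdep : ∀ Qk, hybT B S (dinsert k Qk Q') k.val = W := by
        intro Qk
        refine hybT_dep k.val fun i hi => ?_
        have hik : i ≠ k := fun he => by rw [he] at hi; omega
        rw [dinsert_ne _ _ _ _ hik, dinsert_ne _ _ _ _ hik]
      set pred := fun g : {i : Fin (d + 1) // i ≠ k} → Fin n =>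
        ∀ i : {i : Fin (d + 1) // i ≠ k}, g i ∈ W i.1 with hpred
      set a := fun (v : Fin n) (g : {i : Fin (d + 1) // i ≠ k} → Fin n) =>
        if pred g then B (insertAt k v g) else 0 with ha
      have haB : ∀ v g, |a v g| ≤ 1 := by
        intro v g
        rw [ha]
        dsimp only
        split
        · exact hB _
        · rw [abs_zero]; exact zero_le_one
      have hfa : ∀ Qk v, f (dinsert k Qk Q') v = ∑ g, a v g := by
        intro Qk v
        rw [hf]
        dsimp only
        rw [hdep Qk]
        rw [ha]
        dsimp only
        rw [← Finset.sum_filter]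
        congr 1
        ext g
        simp [Fintype.mem_piFinset, hpred]
      have hYa : ∀ Qk v, Y (dinsert k Qk Q') v = ∑ g ∈ Qk, a v g := by
        intro Qk v
        rw [hY]
        dsimp only
        rw [ha]
        dsimp only
        rw [← Finset.sum_filter]
        congr 1
        rw [hybR]
        rw [hdep Qk, dinsert_same]
      calc ∑ Qk ∈ qSubsets n d q k,
            (∑ v, |f (dinsert k Qk Q') v - c * Y (dinsert k Qk Q') v|)
          = ∑ v, ∑ Qk ∈ qSubsets n d q k, |(∑ g, a v g) - c * (∑ g ∈ Qk, a v g)| := by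
            rw [Finset.sum_comm]
            refine Finset.sum_congr rfl fun v _ => Finset.sum_congr rfl fun Qk _ => ?_
            rw [hfa Qk v, hYa Qk v]
        _ ≤ ∑ _v : Fin n, ((qSubsets n d q k).card : ℝ) * ((N:ℝ) / Real.sqrt q) := by
            refine Finset.sum_le_sum fun v _ => ?_
            have := samp_abs hq hNq (a v) (haB v)
            rw [← qSubsets_eq, ← hN] at this
            rw [hc]
            calc ∑ Qk ∈ qSubsets n d q k, |(∑ g, a v g) - (N:ℝ)/(q:ℝ) * (∑ g ∈ Qk, a v g)|
                ≤ ((qSubsets n d q k).card : ℝ) * (N:ℝ) / Real.sqrt q := this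
              _ = ((qSubsets n d q k).card : ℝ) * ((N:ℝ) / Real.sqrt q) := by ring
        _ = ((qSubsets n d q k).card : ℝ) * ((n:ℝ) * ((N:ℝ) / Real.sqrt q)) := by
            rw [Finset.sum_const, Finset.card_univ, Fintype.card_fin, nsmul_eq_mul]
            ring
    calc ∑ Q' ∈ rest, ∑ Qk ∈ qSubsets n d q k,
          (∑ v, |f (dinsert k Qk Q') v - c * Y (dinsert k Qk Q') v|)
        ≤ ∑ _Q' ∈ rest, ((qSubsets n d q k).card : ℝ) * ((n:ℝ) * ((N:ℝ) / Real.sqrt q)) :=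
          Finset.sum_le_sum inner
      _ = (rest.card : ℝ) * (((qSubsets n d q k).card : ℝ) * ((n:ℝ) * ((N:ℝ) / Real.sqrt q))) := by
          rw [Finset.sum_const, nsmul_eq_mul]
      _ = (Pi.card : ℝ) * ((n : ℝ) ^ (d + 1) / Real.sqrt q) := by
          have hcard : (Pi.card : ℝ) = ((qSubsets n d q k).card : ℝ) * (rest.card : ℝ) := by
            have h1 : ∑ _Q ∈ Pi, (1:ℝ) = ∑ _Qk ∈ qSubsets n d q k, ∑ _Q' ∈ rest, (1:ℝ) := by
              rw [hPi, sum_piFinset_split k (fun j => qSubsets n d q j) (fun _ => (1:ℝ))]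
            simpa [Finset.sum_const, nsmul_eq_mul] using h1
          have hnN : (n:ℝ) * (N:ℝ) = (n:ℝ)^(d+1) := by
            have : (N:ℝ) = (n:ℝ)^d := by
              rw [hN, card_partial n d k]
              push_cast
              ring
            rw [this, pow_succ]
            ring
          rw [hcard, ← hnN]
          ring
  calc ∑ Q ∈ Pi, (boxSum B (hybT B S Q k.val) - boxSum B (hybT B S Q (k.val + 1)))
      ≤ ∑ Q ∈ Pi, ∑ v, |f Q v - c * Y Q v| := Finset.sum_le_sum fun Q _ => e3 Q
    _ ≤ (Pi.card : ℝ) * ((n : ℝ) ^ (d + 1) / Real.sqrt q) := e4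


end AuxProof

set_option maxHeartbeats 1000000 in
/-- bound). With `Q₁,…,Q_{d+1}` independent
uniformly random `q`-subsets,
`‖B‖⁺_{□,d} ≤ (1/n^{d+1}) E[max_{R_j ⊆ Q_j} B(R₁⁺,…,R_{d+1}⁺)] + (d+1)/√q`. -/
theorem iterated_cut_bound (n d q : ℕ) (hq : 1 ≤ q)
    (hqn : ∀ j : Fin (d + 1),
      q ≤ Fintype.card ({i : Fin (d + 1) // i ≠ j} → Fin n))
    (B : (Fin (d + 1) → Fin n) → ℝ) (hB : ∀ v, |B v| ≤ 1) :
    onesidedCutNorm n d B ≤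
      (1 / (n : ℝ) ^ (d + 1)) *
        ((∑ Q ∈ Fintype.piFinset (fun j => qSubsets n d q j), innerMax B Q) /
          ((Fintype.piFinset (fun j => qSubsets n d q j)).card : ℝ)) +
      ((d : ℝ) + 1) / Real.sqrt q := by
  classical
  set Pi := Fintype.piFinset (fun j => qSubsets n d q j) with hPi
  have hq0 : (0:ℝ) < (q:ℝ) := by exact_mod_cast hq
  have hsq0 : 0 < Real.sqrt q := Real.sqrt_pos.2 hq0
  rcases Nat.eq_zero_or_pos n with hn | hn
  · subst hn
    rw [onesidedCutNorm]
    have h0 : ((0:ℕ):ℝ) ^ (d + 1) = 0 := by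
      norm_num
    rw [h0, div_zero, one_div, inv_zero, zero_mul, zero_add]
    positivity
  · have hnr : (0:ℝ) < (n:ℝ) := by exact_mod_cast hn
    have hn0 : (0:ℝ) < (n:ℝ) ^ (d + 1) := by positivity
    have hPicard : 0 < Pi.card := by
      rw [hPi, Fintype.card_piFinset]
      refine Finset.prod_pos fun j _ => ?_
      rw [qSubsets_eq, Finset.card_powersetCard, Finset.card_univ]
      exact Nat.choose_pos (hqn j)
    have hPir : (0:ℝ) < (Pi.card : ℝ) := by exact_mod_cast hPicard
    have key : ∀ S : Fin (d + 1) → Finset (Fin n),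
        boxSum B S ≤ (∑ Q ∈ Pi, innerMax B Q) / (Pi.card : ℝ)
          + ((d:ℝ) + 1) * ((n:ℝ) ^ (d + 1) / Real.sqrt q) := by
      intro S
      have tel : ∀ Q, boxSum B S - boxSum B (hybT B S Q (d + 1))
          = ∑ m ∈ Finset.range (d + 1),
              (boxSum B (hybT B S Q m) - boxSum B (hybT B S Q (m + 1))) := fun Q =>
        (Finset.sum_range_sub' (fun m => boxSum B (hybT B S Q m)) (d + 1)).symm
      have sum_tel : ∑ Q ∈ Pi, (boxSum B S - boxSum B (hybT B S Q (d + 1)))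
          ≤ ((d:ℝ) + 1) * ((Pi.card : ℝ) * ((n:ℝ) ^ (d + 1) / Real.sqrt q)) := by
        calc ∑ Q ∈ Pi, (boxSum B S - boxSum B (hybT B S Q (d + 1)))
            = ∑ Q ∈ Pi, ∑ m ∈ Finset.range (d + 1),
                (boxSum B (hybT B S Q m) - boxSum B (hybT B S Q (m + 1))) :=
              Finset.sum_congr rfl fun Q _ => tel Q
          _ = ∑ m ∈ Finset.range (d + 1), ∑ Q ∈ Pi,
                (boxSum B (hybT B S Q m) - boxSum B (hybT B S Q (m + 1))) := Finset.sum_comm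
          _ ≤ ∑ _m ∈ Finset.range (d + 1), (Pi.card : ℝ) * ((n:ℝ) ^ (d + 1) / Real.sqrt q) := by
              refine Finset.sum_le_sum fun m hm => ?_
              exact step_bound hq hqn B hB S ⟨m, Finset.mem_range.1 hm⟩
          _ = ((d:ℝ) + 1) * ((Pi.card : ℝ) * ((n:ℝ) ^ (d + 1) / Real.sqrt q)) := by
              rw [Finset.sum_const, Finset.card_range, nsmul_eq_mul]
              push_cast
              ring
      have hinner : ∀ Q ∈ Pi, boxSum B (hybT B S Q (d + 1)) ≤ innerMax B Q := by
        intro Q _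
        rw [innerMax]
        apply le_csSup
        · refine ⟨(n:ℝ) ^ (d + 1), ?_⟩
          rintro r ⟨R, hR, rfl⟩
          exact boxSum_le hB _
        · refine ⟨fun j => hybR B S Q j, fun j => Finset.filter_subset _ _, ?_⟩
          exact congrArg (boxSum B) (funext fun j => hybT_final j)
      have comb : (Pi.card : ℝ) * boxSum B S
          ≤ (∑ Q ∈ Pi, innerMax B Q)
            + ((d:ℝ) + 1) * ((Pi.card : ℝ) * ((n:ℝ) ^ (d + 1) / Real.sqrt q)) := by
        have h1 : ∑ _Q ∈ Pi, boxSum B S = (Pi.card : ℝ) * boxSum B S := by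
          rw [Finset.sum_const, nsmul_eq_mul]
        have h2 : ∑ Q ∈ Pi, boxSum B (hybT B S Q (d + 1)) ≤ ∑ Q ∈ Pi, innerMax B Q :=
          Finset.sum_le_sum hinner
        have h3 := sum_tel
        rw [Finset.sum_sub_distrib, h1] at h3
        linarith
      have hdiv : boxSum B S ≤ ((∑ Q ∈ Pi, innerMax B Q)
            + ((d:ℝ) + 1) * ((Pi.card : ℝ) * ((n:ℝ) ^ (d + 1) / Real.sqrt q))) / (Pi.card : ℝ) := by
        rw [le_div_iff₀ hPir]
        calc boxSum B S * (Pi.card : ℝ) = (Pi.card : ℝ) * boxSum B S := by ring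
          _ ≤ _ := comb
      refine le_trans hdiv (le_of_eq ?_)
      field_simp
    rw [onesidedCutNorm, div_le_iff₀ hn0]
    refine ciSup_le fun S => le_trans (key S) (le_of_eq ?_)
    field_simp
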